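/- Let F be a field, n ≥ 1, and let x₁,…,xₙ, a₁,…,a_{n−1}, b₁,…,b_{n−1} ∈ F be such that x_k + b_β ≠ 0 for all k and β. Let M be the n×n matrix with rows indexed by α = 0,1,…,n−1 and columns by k = 1,…,n, whose entries are M_{α,k} = ∏_{m=1}^{α}(x_k + a_m) / ∏_{m=1}^{α}(x_k + b_m) (so the row α = 0 consists of ones). Then det M = [∏_{1≤k<l≤n}(x_k − x_l) · ∏_{1≤α≤β≤n−1}(a_α − b_β)] / ∏_{1≤k≤n, 1≤β≤n−1}(x_k + b_β). (Krattenthaler-type determinant evaluation.) -/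

import Mathlib

open Finset Polynomial

section
variable {R : Type*} [CommRing R] [Nontrivial R]

noncomputable def krPol (n : ℕ) (a b : Fin n → R) (α : ℕ) : R[X] :=
  ∏ m : Fin n, (X + C (if (m : ℕ) < α then a m else b m))

omit [Nontrivial R] in
lemma krPol_monic (n : ℕ) (a b : Fin n → R) (α : ℕ) : (krPol n a b α).Monic :=
  monic_prod_of_monic _ _ fun m _ => monic_X_add_C _

lemma krPol_natDegree (n : ℕ) (a b : Fin n → R) (α : ℕ) : (krPol n a b α).natDegree = n := by
  rw [krPol, natDegree_prod_of_monic _ _ fun m _ => monic_X_add_C _]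
  simp [natDegree_X_add_C, natDegree_X]

omit [Nontrivial R] in
lemma krPol_step (n : ℕ) (a b : Fin (n+1) → R) (α : Fin (n+1)) :
    krPol (n+1) a b ((α : ℕ) + 1)
      = krPol (n+1) a b α
        + C (a α - b α) * krPol n (fun m => a m.castSucc) (fun m => b m.succ) α := by
  rw [krPol, krPol, krPol, Fin.prod_univ_succAbove _ α, Fin.prod_univ_succAbove _ α]
  have hs : ∀ m : Fin n, ((α.succAbove m : ℕ) < (α:ℕ) + 1 ↔ (α.succAbove m : ℕ) < (α:ℕ)) := by
    intro m
    have : (α.succAbove m : ℕ) ≠ (α : ℕ) := fun h => α.succAbove_ne m (Fin.ext h)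
    omega
  have hrest : ∀ β : ℕ, (∀ m : Fin n, ((α.succAbove m : ℕ) < β ↔ (α.succAbove m : ℕ) < (α:ℕ))) →
      (∏ m : Fin n, (X + C (if (α.succAbove m : ℕ) < β then a (α.succAbove m) else b (α.succAbove m))))
        = ∏ m : Fin n, (X + C (if (m : ℕ) < (α:ℕ) then a m.castSucc else b m.succ)) := by
    intro β hβ
    refine Finset.prod_congr rfl fun m _ => ?_
    rw [if_congr (hβ m) rfl rfl]
    by_cases h : (m : ℕ) < (α : ℕ)
    · rw [Fin.succAbove_of_castSucc_lt _ _ (by simpa [Fin.lt_iff_val_lt_val] using h)]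
      simp [h]
    · rw [Fin.succAbove_of_le_castSucc _ _ (by simpa [Fin.le_iff_val_le_val] using not_lt.mp h)]
      have : ¬ ((m : ℕ) + 1 < (α : ℕ)) := by omega
      simp [h, this]
  rw [hrest _ hs, hrest _ (fun m => Iff.rfl)]
  rw [if_pos (Nat.lt_succ_self _), if_neg (lt_irrefl _)]
  rw [C_sub]; ring

noncomputable def krT (n : ℕ) (a b : Fin n → R) : Matrix (Fin (n+1)) (Fin (n+1)) R :=
  Matrix.of fun α j => (krPol n a b α).coeff j

def krN (n : ℕ) : ℕ := ∑ α : Fin (n+1), (Ioi α).card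

lemma krN_succ (n : ℕ) : krN (n+1) = (n+1) + krN n := by
  simp [krN, Fin.sum_univ_succ, Fin.card_Ioi]

lemma prod_Ioi_shift {M : Type*} [CommMonoid M] : ∀ {n : ℕ} (f : Fin (n+1) → Fin (n+1) → M),
    ∏ α : Fin (n+1), ∏ β ∈ Ioi α, f α β
      = ∏ α : Fin n, ∏ β ∈ Ici α, f α.castSucc β.succ
  | 0, f => by simp
  | n+1, f => by
    rw [Finset.prod_sigma', Finset.prod_sigma']
    refine Finset.prod_nbij'
      (i := fun p => ⟨⟨(p.1 : ℕ) % (n+1), Nat.mod_lt _ (Nat.succ_pos n)⟩,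
        ⟨(p.2 : ℕ) - 1, by have := p.2.isLt; omega⟩⟩)
      (j := fun p => ⟨p.1.castSucc, p.2.succ⟩) ?_ ?_ ?_ ?_ ?_
    · rintro ⟨α, β⟩ h
      simp only [Finset.mem_sigma, Finset.mem_univ, Finset.mem_Ioi, true_and,
        Fin.lt_iff_val_lt_val] at h
      simp only [Finset.mem_sigma, Finset.mem_univ, Finset.mem_Ici, true_and,
        Fin.le_iff_val_le_val]
      have hβ : (β : ℕ) ≤ n + 1 := Nat.lt_succ_iff.mp β.isLt
      have hα : (α : ℕ) < n + 1 := by omega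
      simp only [Nat.mod_eq_of_lt hα]
      omega
    · rintro ⟨α, β⟩ h
      simp only [Finset.mem_sigma, Finset.mem_univ, Finset.mem_Ici, true_and,
        Fin.le_iff_val_le_val] at h
      simp only [Finset.mem_sigma, Finset.mem_univ, Finset.mem_Ioi, true_and,
        Fin.lt_iff_val_lt_val, Fin.coe_castSucc, Fin.val_succ]
      omega
    · rintro ⟨α, β⟩ h
      simp only [Finset.mem_sigma, Finset.mem_univ, Finset.mem_Ioi, true_and,
        Fin.lt_iff_val_lt_val] at h
      have hβ : (β : ℕ) ≤ n + 1 := Nat.lt_succ_iff.mp β.isLt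
      have hα : (α : ℕ) < n + 1 := by omega
      ext
      · simp [Nat.mod_eq_of_lt hα]
      · simp only []
        refine heq_of_eq ?_
        ext
        simp [Fin.val_succ]
        omega
    · rintro ⟨α, β⟩ h
      ext <;> simp [Nat.mod_eq_of_lt α.isLt]
    · rintro ⟨α, β⟩ h
      simp only [Finset.mem_sigma, Finset.mem_univ, Finset.mem_Ioi, true_and,
        Fin.lt_iff_val_lt_val] at h
      have hβ : (β : ℕ) ≤ n + 1 := Nat.lt_succ_iff.mp β.isLt
      have hα : (α : ℕ) < n + 1 := by omega
      congr 1 <;> ext <;> simp [Nat.mod_eq_of_lt hα] <;> omega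

theorem krT_det : ∀ (n : ℕ) (a b : Fin n → R),
    (krT n a b).det = (-1 : R)^(krN n) * ∏ α : Fin n, ∏ β ∈ Ici α, (a α - b β)
  | 0, a, b => by
    simp [krT, krN, krPol, Matrix.det_fin_one]
  | n+1, a, b => by
    set a' : Fin n → R := fun m => a m.castSucc with ha'
    set b' : Fin n → R := fun m => b m.succ with hb'
    set B : Matrix (Fin (n+2)) (Fin (n+2)) R := Matrix.of fun i j =>
      Fin.cases ((krPol (n+1) a b 0).coeff j)
        (fun α => (a α - b α) * (krPol n a' b' α).coeff j) i with hB
    have hdet : (krT (n+1) a b).det = B.det := by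
      refine Matrix.det_eq_of_forall_row_eq_smul_add_pred (fun _ => 1) (fun j => ?_) (fun i j => ?_)
      · simp [krT, hB]
      · have := congrArg (fun p => Polynomial.coeff p j) (krPol_step n a b i)
        simp only [coeff_add, coeff_C_mul] at this
        simp only [krT, hB, Matrix.of_apply, Fin.cases_succ, Fin.val_succ, Fin.coe_castSucc,
          one_mul]
        rw [this]; ring
    rw [hdet, Matrix.det_succ_column B (Fin.last (n+1))]
    have hzero : ∀ i : Fin (n+2), i ≠ 0 → ((-1 : R)^((i : ℕ) + (Fin.last (n+1) : ℕ))
        * B i (Fin.last (n+1)) * (B.submatrix i.succAbove (Fin.last (n+1)).succAbove).det) = 0 := by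
      intro i hi
      obtain ⟨α, rfl⟩ := Fin.exists_succ_eq.mpr hi
      have : B α.succ (Fin.last (n+1)) = 0 := by
        simp only [hB, Matrix.of_apply, Fin.cases_succ]
        rw [Polynomial.coeff_eq_zero_of_natDegree_lt]
        · ring
        · rw [krPol_natDegree]; simp [Fin.val_last]
      rw [this]; ring
    rw [Finset.sum_eq_single 0 (fun i _ hi => hzero i hi) (by simp)]
    have hB0 : B 0 (Fin.last (n+1)) = 1 := by
      simp only [hB, Matrix.of_apply, Fin.cases_zero]
      have := (krPol_monic (n+1) a b 0).coeff_natDegree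
      rwa [krPol_natDegree] at this
    have hsub : (B.submatrix (0 : Fin (n+2)).succAbove (Fin.last (n+1)).succAbove)
        = Matrix.of fun i j => (a i - b i) * krT n a' b' i j := by
      ext i j
      simp [hB, krT, Fin.succAbove_last, Fin.zero_succAbove]
    rw [hB0, hsub, Matrix.det_mul_column, krT_det n a' b']
    have hsplit : ∀ α : Fin (n+1), (∏ β ∈ Ici α, (a α - b β))
        = (a α - b α) * ∏ β ∈ Ioi α, (a α - b β) := by
      intro α
      rw [Finset.Ici_eq_cons_Ioi, Finset.prod_cons]
    have hprod : ∏ α : Fin (n+1), ∏ β ∈ Ici α, (a α - b β)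
        = (∏ i : Fin (n+1), (a i - b i)) * ∏ α : Fin n, ∏ β ∈ Ici α, (a' α - b' β) := by
      calc ∏ α : Fin (n+1), ∏ β ∈ Ici α, (a α - b β)
          = ∏ α : Fin (n+1), ((a α - b α) * ∏ β ∈ Ioi α, (a α - b β)) :=
            Finset.prod_congr rfl fun α _ => hsplit α
        _ = (∏ i : Fin (n+1), (a i - b i)) * ∏ α : Fin (n+1), ∏ β ∈ Ioi α, (a α - b β) :=
            Finset.prod_mul_distrib
        _ = _ := by rw [prod_Ioi_shift (fun α β => a α - b β)]
    rw [krN_succ, pow_add, hprod]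
    simp only [Fin.val_last, Fin.val_zero, zero_add, mul_one, one_mul]
    ring

end

/-- Krattenthaler-type determinant evaluation: for the `(n+1)×(n+1)` matrix with rows
indexed by `α = 0,…,n` and entries
`M_{α,k} = ∏_{m<α}(x_k + a_m) / ∏_{m<α}(x_k + b_m)` (row `α = 0` consists of ones),
`det M = ∏_{k<l}(x_k − x_l) · ∏_{α≤β}(a_α − b_β) / ∏_{k,β}(x_k + b_β)`. -/
theorem stmt_15 {F : Type*} [Field F] (n : ℕ)
    (x : Fin (n + 1) → F) (a b : Fin n → F)
    (hxb : ∀ k β, x k + b β ≠ 0) :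
    (Matrix.of fun α k : Fin (n + 1) =>
        (∏ m ∈ univ.filter (fun m : Fin n => (m : ℕ) < (α : ℕ)), (x k + a m)) /
        (∏ m ∈ univ.filter (fun m : Fin n => (m : ℕ) < (α : ℕ)), (x k + b m))).det
      = (∏ k : Fin (n + 1), ∏ l ∈ Ioi k, (x k - x l)) *
          (∏ α : Fin n, ∏ β ∈ Ici α, (a α - b β)) /
        ∏ k : Fin (n + 1), ∏ β : Fin n, (x k + b β) := by
  classical
  set D : Fin (n+1) → F := fun k => ∏ β : Fin n, (x k + b β) with hD
  have hDne : ∀ k, D k ≠ 0 := fun k => Finset.prod_ne_zero_iff.mpr fun β _ => hxb k β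
  have heval : ∀ (α : ℕ) (k : Fin (n+1)), (krPol n a b α).eval (x k)
      = (∏ m ∈ univ.filter (fun m : Fin n => (m : ℕ) < α), (x k + a m)) *
        (∏ m ∈ univ.filter (fun m : Fin n => ¬ (m : ℕ) < α), (x k + b m)) := by
    intro α k
    rw [krPol, eval_prod,
      ← Finset.prod_filter_mul_prod_filter_not univ (fun m : Fin n => (m : ℕ) < α)]
    congr 1 <;> (refine Finset.prod_congr rfl fun m hm => ?_) <;> simp at hm <;> simp [hm]
  have hM : (Matrix.of fun α k : Fin (n + 1) =>
        (∏ m ∈ univ.filter (fun m : Fin n => (m : ℕ) < (α : ℕ)), (x k + a m)) /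
        (∏ m ∈ univ.filter (fun m : Fin n => (m : ℕ) < (α : ℕ)), (x k + b m)))
      = Matrix.of fun α k : Fin (n+1) => (D k)⁻¹ * ((Matrix.of fun α k : Fin (n+1) =>
          (krPol n a b (α : ℕ)).eval (x k)) α k) := by
    ext α k
    simp only [Matrix.of_apply]
    rw [heval]
    have hdsplit : D k
        = (∏ m ∈ univ.filter (fun m : Fin n => (m : ℕ) < (α : ℕ)), (x k + b m)) *
          (∏ m ∈ univ.filter (fun m : Fin n => ¬ (m : ℕ) < (α : ℕ)), (x k + b m)) :=
      (Finset.prod_filter_mul_prod_filter_not univ _ _).symm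
    have h1 : (∏ m ∈ univ.filter (fun m : Fin n => (m : ℕ) < (α : ℕ)), (x k + b m)) ≠ 0 :=
      Finset.prod_ne_zero_iff.mpr fun m _ => hxb k m
    have h2 : (∏ m ∈ univ.filter (fun m : Fin n => ¬ (m : ℕ) < (α : ℕ)), (x k + b m)) ≠ 0 :=
      Finset.prod_ne_zero_iff.mpr fun m _ => hxb k m
    set A' := ∏ m ∈ univ.filter (fun m : Fin n => (m : ℕ) < (α : ℕ)), (x k + a m) with hA'
    set Q1 := ∏ m ∈ univ.filter (fun m : Fin n => (m : ℕ) < (α : ℕ)), (x k + b m) with hQ1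
    set Q2 := ∏ m ∈ univ.filter (fun m : Fin n => ¬ (m : ℕ) < (α : ℕ)), (x k + b m) with hQ2
    rw [hdsplit]
    field_simp
  rw [hM, Matrix.det_mul_row]
  have hEW : (Matrix.of fun α k : Fin (n+1) => (krPol n a b (α : ℕ)).eval (x k))
      = krT n a b * (Matrix.vandermonde x).transpose := by
    ext α k
    rw [Matrix.mul_apply]
    simp only [krT, Matrix.of_apply, Matrix.transpose_apply, Matrix.vandermonde_apply]
    rw [eval_eq_sum_range, krPol_natDegree, ← Fin.sum_univ_eq_sum_range
      (fun i => (krPol n a b (α : ℕ)).coeff i * x k ^ i) (n+1)]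
  rw [hEW, Matrix.det_mul, Matrix.det_transpose, Matrix.det_vandermonde, krT_det]
  have hsign : (∏ k : Fin (n+1), ∏ l ∈ Ioi k, (x k - x l))
      = (-1 : F)^(krN n) * ∏ i : Fin (n+1), ∏ j ∈ Ioi i, (x j - x i) := by
    rw [krN, ← Finset.prod_pow_eq_pow_sum, ← Finset.prod_mul_distrib]
    refine Finset.prod_congr rfl fun k _ => ?_
    rw [← Finset.prod_const (-1 : F), ← Finset.prod_mul_distrib]
    exact Finset.prod_congr rfl fun l _ => by ring
  rw [hsign]
  rw [Finset.prod_inv_distrib]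
  field_simp
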